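/- The generating function for the normalized volumes of the slices of the unit cube [0,1]^r by the hyperplanes x_1+⋯+x_r = k equals the Eulerian polynomial: Σ_{k=1}^{r} Vol_N([0,1]^r ∩ {k−1 ≤ x_1+⋯+x_r ≤ k}) q^k = A_r(q), where Vol_N denotes r! times Euclidean volume. -/

import Mathlib

open MeasureTheory Polynomial Finset

namespace Stmt13

variable {r : ℕ}

/-- the index `i - 1` -/
def pidx (i : Fin r) (_h : i.1 ≠ 0) : Fin r :=
  ⟨i.1 - 1, Nat.lt_of_le_of_lt (Nat.sub_le _ _) i.2⟩

lemma sum_le_zero {M : Type*} [AddCommMonoid M] (f : Fin r → M) (i : Fin r) (h : i.1 = 0) :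
    ∑ j ∈ univ.filter (· ≤ i), f j = f i := by
  have : univ.filter (· ≤ i) = {i} := by
    ext j
    simp only [mem_filter, mem_univ, true_and, mem_singleton, ← Fin.val_eq_val,
      Fin.le_def]
    omega
  rw [this, Finset.sum_singleton]

lemma sum_le_step {M : Type*} [AddCommMonoid M] (f : Fin r → M) (i : Fin r) (h : i.1 ≠ 0) :
    ∑ j ∈ univ.filter (· ≤ i), f j = (∑ j ∈ univ.filter (· ≤ pidx i h), f j) + f i := by
  have hne : i ∉ univ.filter (· ≤ pidx i h) := by
    simp [pidx, Fin.le_def]; omega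
  have : univ.filter (· ≤ i) = insert i (univ.filter (· ≤ pidx i h)) := by
    ext j
    simp only [mem_filter, mem_univ, true_and, mem_insert, ← Fin.val_eq_val, Fin.le_def, pidx]
    omega
  rw [this, Finset.sum_insert hne, add_comm]

lemma sum_le_top {M : Type*} [AddCommMonoid M] (f : Fin r → M) (i : Fin r) (h : i.1 + 1 = r) :
    ∑ j ∈ univ.filter (· ≤ i), f j = ∑ j, f j := by
  have : univ.filter (· ≤ i) = univ := by
    ext j
    simp only [mem_filter, mem_univ, true_and, Fin.le_def, iff_true]
    omega
  rw [this]

end Stmt13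

namespace S2
open scoped Classical

variable {r : ℕ}

/-- descent of σ at position i (comparing position i-1 and i in the ordering σ⁻¹) -/
def desc (σ : Equiv.Perm (Fin r)) (i : Fin r) : Prop :=
  if h : i.1 = 0 then False else σ⁻¹ i < σ⁻¹ (Stmt13.pidx i h)

noncomputable def dind (σ : Equiv.Perm (Fin r)) (i : Fin r) : ℕ :=
  if desc σ i then 1 else 0

noncomputable def mcount (σ : Equiv.Perm (Fin r)) (i : Fin r) : ℕ :=
  ∑ j ∈ Finset.univ.filter (· ≤ i), dind σ j

noncomputable def dcount (σ : Equiv.Perm (Fin r)) : ℕ := ∑ j, dind σ j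

def psum (x : Fin r → ℝ) (i : Fin r) : ℝ := ∑ j ∈ Finset.univ.filter (· ≤ i), x j

noncomputable def psi (σ : Equiv.Perm (Fin r)) (x : Fin r → ℝ) : Fin r → ℝ :=
  fun i => psum x i - (mcount σ i : ℝ)

def cube (r : ℕ) : Set (Fin r → ℝ) := {y | ∀ i, y i ∈ Set.Ioo (0:ℝ) 1}

def Reg (σ : Equiv.Perm (Fin r)) : Set (Fin r → ℝ) := {y | StrictMono (y ∘ σ)}

lemma psum_zero (x : Fin r → ℝ) (i : Fin r) (h : i.1 = 0) : psum x i = x i :=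
  Stmt13.sum_le_zero x i h

lemma psum_step (x : Fin r → ℝ) (i : Fin r) (h : i.1 ≠ 0) :
    psum x i = psum x (Stmt13.pidx i h) + x i := Stmt13.sum_le_step x i h

lemma psum_top (x : Fin r → ℝ) (i : Fin r) (h : i.1 + 1 = r) : psum x i = ∑ j, x j :=
  Stmt13.sum_le_top x i h

lemma mcount_zero (σ : Equiv.Perm (Fin r)) (i : Fin r) (h : i.1 = 0) : mcount σ i = 0 := by
  rw [mcount, Stmt13.sum_le_zero _ i h, dind, if_neg]
  simp [desc, h]

lemma mcount_step (σ : Equiv.Perm (Fin r)) (i : Fin r) (h : i.1 ≠ 0) :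
    mcount σ i = mcount σ (Stmt13.pidx i h) + dind σ i := Stmt13.sum_le_step _ i h

lemma mcount_top (σ : Equiv.Perm (Fin r)) (i : Fin r) (h : i.1 + 1 = r) :
    mcount σ i = dcount σ := Stmt13.sum_le_top _ i h

/-- in a region `Reg σ`, comparisons of values are given by `σ⁻¹` -/
lemma Reg.lt_iff {σ : Equiv.Perm (Fin r)} {y : Fin r → ℝ} (hy : y ∈ Reg σ) (a b : Fin r) :
    y a < y b ↔ σ⁻¹ a < σ⁻¹ b := by
  have h1 : y a = (y ∘ σ) (σ⁻¹ a) := by simp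
  have h2 : y b = (y ∘ σ) (σ⁻¹ b) := by simp
  rw [h1, h2]
  exact hy.lt_iff_lt

lemma Reg.inj {σ : Equiv.Perm (Fin r)} {y : Fin r → ℝ} (hy : y ∈ Reg σ) :
    Function.Injective y := by
  intro a b hab
  have : (y ∘ σ) (σ⁻¹ a) = (y ∘ σ) (σ⁻¹ b) := by simpa using hab
  have := hy.injective this
  simpa using this

/-- uniqueness of the sorting permutation -/
lemma Reg.unique {σ τ : Equiv.Perm (Fin r)} {y : Fin r → ℝ} (hσ : y ∈ Reg σ) (hτ : y ∈ Reg τ) :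
    σ = τ := by
  have h : (y ∘ σ) = (y ∘ τ) := by
    have inst : WellFoundedLT (Fin r) := inferInstance
    refine (@StrictMono.range_inj (Fin r) ℝ _ _ inst _ _ hσ hτ).mp ?_
    rw [Set.range_comp, Set.range_comp]
    simp [Set.range_eq_univ.mpr σ.surjective, Set.range_eq_univ.mpr τ.surjective]
  ext i : 1
  exact Reg.inj hσ (congrFun h i)

/-- existence of the sorting permutation -/
lemma exists_reg {y : Fin r → ℝ} (hy : Function.Injective y) : ∃ σ, y ∈ Reg σ := by
  refine ⟨Tuple.sort y, ?_⟩
  exact (Tuple.monotone_sort y).strictMono_of_injective (hy.comp (Tuple.sort y).injective)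

end S2

namespace S3
open scoped Classical
open S2

variable {r : ℕ}

example : (volume : Measure (Fin r → ℝ)).IsAddHaarMeasure := by infer_instance

noncomputable def psumL (i : Fin r) : (Fin r → ℝ) →ₗ[ℝ] ℝ :=
  ∑ j ∈ Finset.univ.filter (· ≤ i), LinearMap.proj j

lemma psumL_apply (i : Fin r) (x : Fin r → ℝ) : psumL i x = psum x i := by
  simp [psumL, psum, LinearMap.proj]

lemma null_lin (ℓ : (Fin r → ℝ) →ₗ[ℝ] ℝ) (hℓ : ℓ ≠ 0) (c : ℝ) :
    volume {x | ℓ x = c} = 0 := by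
  obtain ⟨u, hu⟩ : ∃ u, ℓ u ≠ 0 := by
    by_contra h
    push_neg at h
    exact hℓ (LinearMap.ext fun x => by simp [h x])
  set x₀ : Fin r → ℝ := (c / ℓ u) • u with hx₀
  have hℓx₀ : ℓ x₀ = c := by
    simp [hx₀, _root_.map_smul, div_mul_cancel₀ _ hu]
  have hset : {x | ℓ x = c} = (fun h => h + (-x₀)) ⁻¹' ((LinearMap.ker ℓ : Submodule ℝ (Fin r → ℝ)) : Set (Fin r → ℝ)) := by
    ext x
    simp only [Set.mem_preimage, SetLike.mem_coe, LinearMap.mem_ker, map_add, map_neg, hℓx₀,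
      Set.mem_setOf_eq]
    constructor
    · intro h; rw [h]; ring
    · intro h; linarith
  rw [hset, measure_preimage_add_right]
  refine Measure.addHaar_submodule _ _ ?_
  intro h
  have : u ∈ LinearMap.ker ℓ := h ▸ Submodule.mem_top
  exact hu (LinearMap.mem_ker.mp this)

end S3

namespace S4
open scoped Classical
open S2 S3

variable {r : ℕ}

lemma psumL_single (i : Fin r) : psumL i (Pi.single i 1) = 1 := by
  rw [psumL_apply]
  unfold psum
  simp only [Pi.single_apply]
  rw [Finset.sum_ite_eq' (Finset.univ.filter (· ≤ i)) i (fun _ => (1:ℝ))]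
  simp

lemma psumL_single_of_lt {i j : Fin r} (h : j < i) : psumL j (Pi.single i 1) = 0 := by
  rw [psumL_apply]
  unfold psum
  simp only [Pi.single_apply]
  rw [Finset.sum_ite_eq' (Finset.univ.filter (· ≤ j)) i (fun _ => (1:ℝ))]
  simp only [Finset.mem_filter, Finset.mem_univ, true_and]
  rw [if_neg (fun hc => absurd h (not_lt.mpr hc))]

lemma null_psum_int : volume {x : Fin r → ℝ | ∃ i, ∃ m : ℤ, psum x i = m} = 0 := by
  have : {x : Fin r → ℝ | ∃ i, ∃ m : ℤ, psum x i = m} =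
      ⋃ i : Fin r, ⋃ m : ℤ, {x | psumL i x = (m : ℝ)} := by
    ext x; simp [psumL_apply]
  rw [this]
  refine measure_iUnion_null fun i => measure_iUnion_null fun m => ?_
  refine null_lin _ (fun h => ?_) _
  have := psumL_single i
  rw [h] at this
  simpa using this

lemma null_psum_diff :
    volume {x : Fin r → ℝ | ∃ i j, i ≠ j ∧ ∃ m : ℤ, psum x i - psum x j = m} = 0 := by
  have : {x : Fin r → ℝ | ∃ i j, i ≠ j ∧ ∃ m : ℤ, psum x i - psum x j = m} ⊆
      ⋃ i : Fin r, ⋃ j : Fin r, ⋃ (m : ℤ), {x | (psumL i - psumL j) x = (m : ℝ)} ∩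
        {x | i ≠ j} := by
    intro x ⟨i, j, hij, m, hm⟩
    refine Set.mem_iUnion.mpr ⟨i, Set.mem_iUnion.mpr ⟨j, Set.mem_iUnion.mpr ⟨m, ?_⟩⟩⟩
    exact ⟨by simpa [psumL_apply] using hm, hij⟩
  refine measure_mono_null this ?_
  refine measure_iUnion_null fun i => measure_iUnion_null fun j => measure_iUnion_null fun m => ?_
  rcases eq_or_ne i j with rfl | hij
  · have : {x : Fin r → ℝ | (psumL i - psumL i) x = (m:ℝ)} ∩ {x | i ≠ i} = ∅ := by
      ext x; simp
    rw [this]; simp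
  · refine measure_mono_null Set.inter_subset_left ?_
    refine null_lin _ (fun h => ?_) _
    rcases lt_or_gt_of_ne hij with hlt | hlt
    · -- i < j : evaluate at single j
      have h1 : (psumL i - psumL j) (Pi.single j 1) = -1 := by
        rw [LinearMap.sub_apply, psumL_single, psumL_single_of_lt hlt]; ring
      rw [h] at h1; simpa using h1
    · have h1 : (psumL i - psumL j) (Pi.single i 1) = 1 := by
        rw [LinearMap.sub_apply, psumL_single, psumL_single_of_lt hlt]; ring
      rw [h] at h1; simpa using h1

noncomputable def prj (i : Fin r) : (Fin r → ℝ) →ₗ[ℝ] ℝ := LinearMap.proj i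

lemma prj_apply (i : Fin r) (y : Fin r → ℝ) : prj i y = y i := rfl

lemma null_noninj : volume {y : Fin r → ℝ | ¬ Function.Injective y} = 0 := by
  have : {y : Fin r → ℝ | ¬ Function.Injective y} ⊆
      ⋃ i : Fin r, ⋃ j : Fin r, {y | (prj i - prj j) y = (0:ℝ)} ∩ {y | i ≠ j} := by
    intro y hy
    simp only [Function.Injective, not_forall] at hy
    obtain ⟨i, j, hij, hne⟩ := hy
    refine Set.mem_iUnion.mpr ⟨i, Set.mem_iUnion.mpr ⟨j, ?_⟩⟩
    refine ⟨?_, hne⟩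
    simpa [prj, LinearMap.proj] using sub_eq_zero_of_eq hij
  refine measure_mono_null this ?_
  refine measure_iUnion_null fun i => measure_iUnion_null fun j => ?_
  rcases eq_or_ne i j with rfl | hij
  · have : {y : Fin r → ℝ | (prj i - prj i) y = (0:ℝ)} ∩ {y | i ≠ i} = ∅ := by
      ext y; simp
    rw [this]; simp
  · refine measure_mono_null Set.inter_subset_left ?_
    refine null_lin _ (fun h => ?_) _
    have h1 : (prj i - prj j) (Pi.single i 1) = 1 := by
      simp [prj, LinearMap.proj, Pi.single_apply, hij]
    rw [h] at h1; simpa using h1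

lemma null_coord (i : Fin r) (c : ℝ) : volume {x : Fin r → ℝ | x i = c} = 0 := by
  refine null_lin (prj i) (fun h => ?_) c
  have h1 : prj i (Pi.single i 1) = 1 := by
    simp [prj, LinearMap.proj]
  rw [h] at h1; simpa using h1

end S4

namespace S5
open scoped Classical ENNReal
open S2 S3 S4

variable {r : ℕ}

lemma meas_cube : MeasurableSet (cube r) := by
  have : cube r = ⋂ i : Fin r, (fun y : Fin r → ℝ => y i) ⁻¹' Set.Ioo 0 1 := by
    ext y; simp [cube, Set.mem_iInter]
  rw [this]
  exact MeasurableSet.iInter fun i => (measurable_pi_apply i) measurableSet_Ioo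

lemma meas_Reg (σ : Equiv.Perm (Fin r)) : MeasurableSet (Reg σ) := by
  have : Reg σ = ⋂ a : Fin r, ⋂ b : Fin r,
      {y : Fin r → ℝ | a < b → y (σ a) < y (σ b)} := by
    ext y
    simp only [Reg, Set.mem_setOf_eq, Set.mem_iInter, StrictMono]
    exact ⟨fun h a b hab => h hab, fun h a b hab => h a b hab⟩
  rw [this]
  refine MeasurableSet.iInter fun a => MeasurableSet.iInter fun b => ?_
  by_cases hab : a < b
  · have : {y : Fin r → ℝ | a < b → y (σ a) < y (σ b)} = {y | y (σ a) < y (σ b)} := by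
      ext y; simp [hab]
    rw [this]
    exact measurableSet_lt (measurable_pi_apply _) (measurable_pi_apply _)
  · have : {y : Fin r → ℝ | a < b → y (σ a) < y (σ b)} = Set.univ := by
      ext y; simp [hab]
    rw [this]; exact MeasurableSet.univ

lemma vol_cube : volume (cube r) = 1 := by
  have : cube r = Set.univ.pi fun _ : Fin r => Set.Ioo (0:ℝ) 1 := by
    ext y; simp [cube, Set.mem_univ_pi]
  rw [this, volume_pi_pi]
  simp [Real.volume_Ioo]

lemma vol_cube_reg_eq (σ : Equiv.Perm (Fin r)) :
    volume (cube r ∩ Reg σ) = volume (cube r ∩ Reg 1) := by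
  set f : Fin r ≃ Fin r := σ⁻¹ with hf
  have hmp : MeasurePreserving (⇑(MeasurableEquiv.piCongrLeft (fun _ : Fin r => ℝ) f))
      volume volume := by
    have := MeasureTheory.measurePreserving_piCongrLeft (fun _ : Fin r => (volume : Measure ℝ)) f
    rw [show ((volume : Measure (Fin r → ℝ))) = Measure.pi fun _ => volume from rfl] at *
    exact this
  have hpre : (⇑(MeasurableEquiv.piCongrLeft (fun _ : Fin r => ℝ) f)) ⁻¹' (cube r ∩ Reg 1)
      = cube r ∩ Reg σ := by
    ext y
    have happ : ∀ b, (MeasurableEquiv.piCongrLeft (fun _ : Fin r => ℝ) f) y b = y (f.symm b) := by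
      intro b
      simp [MeasurableEquiv.piCongrLeft, Equiv.piCongrLeft_apply]
    constructor
    · rintro ⟨hc, hm⟩
      refine ⟨fun i => ?_, ?_⟩
      · have := hc (f i)
        rwa [happ, Equiv.symm_apply_apply] at this
      · intro a b hab
        have := hm (a := a) (b := b) hab
        simp only [Function.comp, happ] at this ⊢
        simpa [hf, Equiv.Perm.inv_def] using this
    · rintro ⟨hc, hm⟩
      refine ⟨fun i => by rw [happ]; exact hc _, ?_⟩
      intro a b hab
      simp only [Function.comp, happ]
      have := hm (a := a) (b := b) hab
      simpa [hf, Equiv.Perm.inv_def] using this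
  rw [← hpre, hmp.measure_preimage]
  exact (meas_cube.inter (meas_Reg 1)).nullMeasurableSet

lemma vol_cube_reg (σ : Equiv.Perm (Fin r)) :
    volume (cube r ∩ Reg σ) = ((r.factorial : ℝ≥0∞))⁻¹ := by
  have hdisj : ((Finset.univ : Finset (Equiv.Perm (Fin r))) : Set (Equiv.Perm (Fin r))).PairwiseDisjoint
      (fun σ => cube r ∩ Reg σ) := by
    intro σ' _ τ _ hne
    refine Set.disjoint_left.mpr fun y hy1 hy2 => hne ?_
    exact Reg.unique hy1.2 hy2.2
  have hsum : volume (⋃ σ ∈ Finset.univ, (cube r ∩ Reg σ)) =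
      ∑ σ : Equiv.Perm (Fin r), volume (cube r ∩ Reg σ) :=
    measure_biUnion_finset hdisj fun σ _ => meas_cube.inter (meas_Reg σ)
  have hcover : volume (⋃ σ ∈ Finset.univ, (cube r ∩ Reg σ)) = 1 := by
    apply le_antisymm
    · calc volume (⋃ σ ∈ Finset.univ, (cube r ∩ Reg σ)) ≤ volume (cube r) := by
            refine measure_mono ?_
            intro y hy
            simp only [Set.mem_iUnion] at hy
            obtain ⟨σ, _, hc, _⟩ := hy
            exact hc
          _ = 1 := vol_cube
    · rw [← vol_cube (r := r)]
      calc volume (cube r) ≤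
          volume ((⋃ σ ∈ Finset.univ, (cube r ∩ Reg σ)) ∪ {y | ¬ Function.Injective y}) := by
            refine measure_mono fun y hy => ?_
            by_cases hinj : Function.Injective y
            · obtain ⟨σ, hσ⟩ := exists_reg hinj
              exact Or.inl (Set.mem_iUnion.mpr ⟨σ, Set.mem_iUnion.mpr ⟨Finset.mem_univ σ, hy, hσ⟩⟩)
            · exact Or.inr hinj
        _ ≤ volume (⋃ σ ∈ Finset.univ, (cube r ∩ Reg σ)) + volume {y : Fin r → ℝ | ¬ Function.Injective y} :=
            measure_union_le _ _
        _ = volume (⋃ σ ∈ Finset.univ, (cube r ∩ Reg σ)) := by rw [null_noninj]; ring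
  have hall : ∀ σ : Equiv.Perm (Fin r), volume (cube r ∩ Reg σ) = volume (cube r ∩ Reg 1) :=
    vol_cube_reg_eq
  rw [hsum] at hcover
  rw [Finset.sum_congr rfl (fun σ _ => hall σ)] at hcover
  rw [Finset.sum_const, Finset.card_univ, Fintype.card_perm, Fintype.card_fin] at hcover
  have hne : (r.factorial : ℝ≥0∞) ≠ 0 := by
    simp [Nat.factorial_ne_zero]
  have hnt : (r.factorial : ℝ≥0∞) ≠ ⊤ := by simp
  rw [hall σ]
  have : (r.factorial : ℝ≥0∞)⁻¹ * ((r.factorial : ℝ≥0∞) * volume (cube r ∩ Reg 1))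
      = (r.factorial : ℝ≥0∞)⁻¹ * 1 := by
    rw [← hcover]; congr 1
    simp [nsmul_eq_mul]
  rw [← mul_assoc, ENNReal.inv_mul_cancel hne hnt, one_mul, mul_one] at this
  exact this

end S5

namespace S6
open scoped Classical ENNReal
open S2 S3 S4

variable {r : ℕ}

noncomputable def Smap : (Fin r → ℝ) →ₗ[ℝ] (Fin r → ℝ) := LinearMap.pi (fun i => psumL i)

lemma Smap_apply (x : Fin r → ℝ) (i : Fin r) : Smap x i = psum x i := by
  simp [Smap, LinearMap.pi_apply, psumL_apply]

lemma psum_single (j : Fin r) (i : Fin r) :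
    psum (Pi.single j (1:ℝ)) i = if j ≤ i then 1 else 0 := by
  unfold psum
  simp only [Pi.single_apply]
  rw [Finset.sum_ite_eq' (Finset.univ.filter (· ≤ i)) j (fun _ => (1:ℝ))]
  simp

lemma det_Smap : LinearMap.det (Smap (r := r)) = 1 := by
  rw [← LinearMap.det_toMatrix (Pi.basisFun ℝ (Fin r))]
  have hM : ∀ i j, (LinearMap.toMatrix (Pi.basisFun ℝ (Fin r)) (Pi.basisFun ℝ (Fin r)) Smap) i j
      = if j ≤ i then 1 else 0 := by
    intro i j
    rw [LinearMap.toMatrix_apply]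
    simp only [Pi.basisFun_apply, Pi.basisFun_repr]
    rw [Smap_apply, psum_single]
  rw [Matrix.det_of_lowerTriangular _ ?_]
  · rw [Finset.prod_congr rfl fun i _ => by rw [hM i i, if_pos le_rfl]]
    simp
  · intro i j hij
    rw [hM i j, if_neg]
    have hij' : i < j := hij
    exact fun h => absurd (lt_of_le_of_lt h hij') (lt_irrefl j)

lemma meas_psi (σ : Equiv.Perm (Fin r)) : Measurable (psi σ) := by
  refine measurable_pi_lambda _ fun i => ?_
  unfold psi psum
  exact (Finset.measurable_sum _ fun j _ => measurable_pi_apply j).sub measurable_const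

lemma vol_psi_preimage (σ : Equiv.Perm (Fin r)) (A : Set (Fin r → ℝ)) :
    volume (psi σ ⁻¹' A) = volume A := by
  set mvec : Fin r → ℝ := fun i => (mcount σ i : ℝ) with hmvec
  have hsplit : psi σ ⁻¹' A = Smap ⁻¹' ((fun y : Fin r → ℝ => y + (-mvec)) ⁻¹' A) := by
    ext x
    simp only [Set.mem_preimage]
    have : (fun i => psum x i - mvec i) = Smap x + (-mvec) := by
      funext i; simp [Smap_apply, sub_eq_add_neg]
    constructor
    · intro h
      show Smap x + (-mvec) ∈ A
      rw [← this]; exact h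
    · intro h
      show psi σ x ∈ A
      have : psi σ x = Smap x + (-mvec) := by
        funext i; simp [psi, Smap_apply, hmvec, sub_eq_add_neg]
      rw [this]; exact h
  rw [hsplit]
  rw [Measure.addHaar_preimage_linearMap volume (by rw [det_Smap]; norm_num)]
  rw [measure_preimage_add_right]
  rw [det_Smap]
  simp

end S6

namespace S7
open scoped Classical ENNReal
open S2 S3 S4 S6

variable {r : ℕ}

lemma desc_iff {σ : Equiv.Perm (Fin r)} {i : Fin r} (h : i.1 ≠ 0) :
    desc σ i ↔ σ⁻¹ i < σ⁻¹ (Stmt13.pidx i h) := by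
  simp [desc, h]

lemma not_desc_zero {σ : Equiv.Perm (Fin r)} {i : Fin r} (h : i.1 = 0) : ¬ desc σ i := by
  simp [desc, h]

lemma pidx_ne {i : Fin r} (h : i.1 ≠ 0) : Stmt13.pidx i h ≠ i := by
  simp only [ne_eq, ← Fin.val_eq_val, Stmt13.pidx]
  omega

/-- backward direction: each piece lies inside the open slice -/
lemma backward (hr : 1 ≤ r) (σ : Equiv.Perm (Fin r)) {x : Fin r → ℝ}
    (hx : psi σ x ∈ cube r ∩ Reg σ) :
    (∀ i, x i ∈ Set.Ioo (0:ℝ) 1) ∧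
      (dcount σ : ℝ) < ∑ i, x i ∧ ∑ i, x i < dcount σ + 1 := by
  obtain ⟨hyc, hyr⟩ := hx
  set y : Fin r → ℝ := psi σ x with hy
  have hyval : ∀ i, y i = psum x i - mcount σ i := fun i => rfl
  have hcoord : ∀ i, x i ∈ Set.Ioo (0:ℝ) 1 := by
    intro i
    by_cases h : i.1 = 0
    · have h1 : psum x i = x i := psum_zero x i h
      have h2 : y i = x i := by rw [hyval, h1, mcount_zero σ i h]; simp
      rw [← h2]; exact hyc i
    · set p := Stmt13.pidx i h with hp
      have hps : psum x i = psum x p + x i := psum_step x i h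
      have hms : mcount σ i = mcount σ p + dind σ i := mcount_step σ i h
      have hxi : x i = y i - y p + (dind σ i : ℝ) := by
        rw [hyval, hyval, hps, hms]
        push_cast
        ring
      have hyi := hyc i
      have hyp := hyc p
      by_cases hd : desc σ i
      · have hltc : y i < y p := (Reg.lt_iff hyr i p).mpr ((desc_iff h).mp hd)
        rw [hxi]
        simp only [dind, if_pos hd, Set.mem_Ioo] at hyi hyp ⊢
        push_cast
        constructor <;> nlinarith [hyi.1, hyi.2, hyp.1, hyp.2]
      · have hlt : y p < y i := by
          have hne : σ⁻¹ p ≠ σ⁻¹ i := fun hc => pidx_ne h (σ⁻¹.injective hc)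
          rcases lt_or_gt_of_ne hne with h1 | h1
          · exact (Reg.lt_iff hyr p i).mpr h1
          · exact absurd ((desc_iff h).mpr h1) hd
        rw [hxi]
        simp only [dind, if_neg hd, Set.mem_Ioo] at hyi hyp ⊢
        push_cast
        constructor <;> nlinarith [hyi.1, hyi.2, hyp.1, hyp.2]
  have hlast : (⟨r - 1, by omega⟩ : Fin r).1 + 1 = r := by simp; omega
  set il : Fin r := ⟨r - 1, by omega⟩ with hil
  have h1 : psum x il = ∑ j, x j := psum_top x il hlast
  have h2 : mcount σ il = dcount σ := mcount_top σ il hlast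
  have h3 : y il = ∑ j, x j - dcount σ := by rw [hyval, h1, h2]
  have h4 := hyc il
  simp only [Set.mem_Ioo, h3] at h4
  exact ⟨hcoord, by linarith [h4.1], by linarith [h4.2]⟩

end S7

namespace S8
open scoped Classical ENNReal
open S2 S3 S4 S6 S7

variable {r : ℕ}

/-- forward direction: a.e. point of the slice lies in some piece -/
lemma forward (hr : 1 ≤ r) {k : ℕ} (hk1 : 1 ≤ k) {x : Fin r → ℝ}
    (hx : ∀ i, x i ∈ Set.Icc (0:ℝ) 1)
    (hs1 : (k:ℝ) - 1 ≤ ∑ i, x i) (hs2 : ∑ i, x i ≤ k)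
    (hN1 : ∀ i, ∀ m : ℤ, psum x i ≠ m)
    (hN2 : ∀ i j, i ≠ j → ∀ m : ℤ, psum x i - psum x j ≠ m) :
    ∃ σ, dcount σ = k - 1 ∧ psi σ x ∈ cube r ∩ Reg σ := by
  set y : Fin r → ℝ := fun i => Int.fract (psum x i) with hy
  have hyfr : ∀ i, y i = Int.fract (psum x i) := fun i => rfl
  have hy01 : ∀ i, y i ∈ Set.Ioo (0:ℝ) 1 := by
    intro i
    refine ⟨lt_of_le_of_ne (by rw [hyfr]; exact Int.fract_nonneg _) fun hc => ?_,
      by rw [hyfr]; exact Int.fract_lt_one _⟩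
    have hfr : Int.fract (psum x i) = 0 := by rw [← hyfr, ← hc]
    have := Int.fract_add_floor (psum x i)
    rw [hfr] at this
    exact hN1 i _ (by linarith)
  have hyinj : Function.Injective y := by
    intro a b hab
    by_contra hne
    refine hN2 a b hne (⌊psum x a⌋ - ⌊psum x b⌋) ?_
    have ha := Int.fract_add_floor (psum x a)
    have hb := Int.fract_add_floor (psum x b)
    rw [hyfr, hyfr] at hab
    push_cast
    linarith
  obtain ⟨σ, hσ⟩ := exists_reg hyinj
  -- the key floor computation
  have key : ∀ n (i : Fin r), i.1 = n → ⌊psum x i⌋ = (mcount σ i : ℤ) := by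
    intro n
    induction n with
    | zero =>
      intro i hi
      rw [psum_zero x i hi, mcount_zero σ i hi]
      have h1 := hx i
      simp only [Set.mem_Icc] at h1
      have h3 : x i ≠ 1 := fun hc => hN1 i 1 (by rw [psum_zero x i hi, hc]; simp)
      simp only [Nat.cast_zero]
      rw [Int.floor_eq_zero_iff]
      exact ⟨h1.1, lt_of_le_of_ne h1.2 h3⟩
    | succ n ih =>
      intro i hi
      have h : i.1 ≠ 0 := by omega
      set p := Stmt13.pidx i h with hp
      have hpn : p.1 = n := by simp [hp, Stmt13.pidx]; omega
      have ihp := ih p hpn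
      have hps : psum x i = psum x p + x i := psum_step x i h
      have hfi := Int.fract_add_floor (psum x i)
      have hfp := Int.fract_add_floor (psum x p)
      have hxi01 := hx i
      simp only [Set.mem_Icc] at hxi01
      have hyi := hy01 i
      have hyp := hy01 p
      simp only [Set.mem_Ioo] at hyi hyp
      have hipne : i ≠ p := (pidx_ne h).symm
      have hyne : y i ≠ y p := fun hc => hipne (hyinj hc)
      have hms : mcount σ i = mcount σ p + dind σ i := mcount_step σ i h
      have hd : ((⌊psum x i⌋ - ⌊psum x p⌋ : ℤ) : ℝ) = x i - y i + y p := by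
        push_cast
        rw [hyfr, hyfr]
        linarith
      rcases lt_or_gt_of_ne hyne with hlt | hlt
      · have hdesc : desc σ i := (desc_iff h).mpr ((Reg.lt_iff hσ i p).mp hlt)
        have h1 : (0:ℝ) < ((⌊psum x i⌋ - ⌊psum x p⌋ : ℤ) : ℝ) := by rw [hd]; linarith
        have h2 : ((⌊psum x i⌋ - ⌊psum x p⌋ : ℤ) : ℝ) < 2 := by rw [hd]; linarith
        have h1' : (0:ℤ) < ⌊psum x i⌋ - ⌊psum x p⌋ := by exact_mod_cast h1
        have h2' : ⌊psum x i⌋ - ⌊psum x p⌋ < 2 := by exact_mod_cast h2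
        rw [hms]
        simp only [dind, if_pos hdesc]
        push_cast
        omega
      · have hdesc : ¬ desc σ i := by
          rw [desc_iff h]
          intro hc
          exact absurd ((Reg.lt_iff hσ i p).mpr hc) (not_lt.mpr (le_of_lt hlt))
        have h1 : (-1:ℝ) < ((⌊psum x i⌋ - ⌊psum x p⌋ : ℤ) : ℝ) := by rw [hd]; linarith
        have h2 : ((⌊psum x i⌋ - ⌊psum x p⌋ : ℤ) : ℝ) < 1 := by rw [hd]; linarith
        have h1' : (-1:ℤ) < ⌊psum x i⌋ - ⌊psum x p⌋ := by exact_mod_cast h1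
        have h2' : ⌊psum x i⌋ - ⌊psum x p⌋ < 1 := by exact_mod_cast h2
        rw [hms]
        simp only [dind, if_neg hdesc]
        push_cast
        omega
  have hpsiy : psi σ x = y := by
    funext i
    have hk := key i.1 i rfl
    have hfi := Int.fract_add_floor (psum x i)
    have hcast : (mcount σ i : ℝ) = (⌊psum x i⌋ : ℝ) := by exact_mod_cast hk.symm
    show psum x i - (mcount σ i : ℝ) = y i
    rw [hyfr, hcast]
    linarith
  refine ⟨σ, ?_, ?_⟩
  · have hlast : (⟨r - 1, by omega⟩ : Fin r).1 + 1 = r := by simp; omega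
    set il : Fin r := ⟨r - 1, by omega⟩ with hil
    have h1 : psum x il = ∑ j, x j := psum_top x il hlast
    have h2 : mcount σ il = dcount σ := mcount_top σ il hlast
    have h3 := key il.1 il rfl
    rw [h2] at h3
    have hfi := Int.fract_add_floor (psum x il)
    have hy1 := hy01 il
    simp only [Set.mem_Ioo] at hy1
    have hsum : ∑ j, x j = y il + (dcount σ : ℝ) := by
      have hcast : ((dcount σ : ℕ) : ℝ) = (⌊psum x il⌋ : ℝ) := by exact_mod_cast h3.symm
      rw [hyfr, ← h1, hcast]
      linarith
    have d1 : (dcount σ : ℝ) < k := by linarith [hy1.1, hsum ▸ hs2]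
    have d2' : (k:ℝ) < (dcount σ:ℝ) + 2 := by linarith [hy1.2, hsum ▸ hs1]
    have d1' : dcount σ < k := by exact_mod_cast d1
    have d2'' : k < dcount σ + 2 := by exact_mod_cast d2'
    omega
  · rw [hpsiy]
    exact ⟨fun i => hy01 i, hσ⟩

/-- pieces for different permutations are disjoint -/
lemma pieces_disjoint {σ τ : Equiv.Perm (Fin r)} {x : Fin r → ℝ}
    (hσ : psi σ x ∈ cube r ∩ Reg σ) (hτ : psi τ x ∈ cube r ∩ Reg τ) : σ = τ := by
  have heq : psi σ x = psi τ x := by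
    funext i
    have h1 := hσ.1 i
    have h2 := hτ.1 i
    simp only [Set.mem_Ioo] at h1 h2
    have hdiff : psi σ x i - psi τ x i = ((mcount τ i : ℤ) - (mcount σ i : ℤ) : ℤ) := by
      show psum x i - (mcount σ i : ℝ) - (psum x i - (mcount τ i : ℝ)) = _
      push_cast
      ring
    have hb1 : (-1:ℝ) < ((mcount τ i : ℤ) - (mcount σ i : ℤ) : ℤ) := by rw [← hdiff]; linarith
    have hb2 : (((mcount τ i : ℤ) - (mcount σ i : ℤ) : ℤ) : ℝ) < 1 := by rw [← hdiff]; linarith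
    have hb1' : (-1:ℤ) < (mcount τ i : ℤ) - (mcount σ i : ℤ) := by exact_mod_cast hb1
    have hb2' : (mcount τ i : ℤ) - (mcount σ i : ℤ) < 1 := by exact_mod_cast hb2
    have : (mcount τ i : ℤ) = (mcount σ i : ℤ) := by omega
    have : psi σ x i - psi τ x i = 0 := by
      rw [hdiff, this]; simp
    linarith
  exact Reg.unique (heq ▸ hσ.2) hτ.2

end S8

namespace S9
open scoped Classical ENNReal
open S2 S3 S4 S5 S6 S7 S8

variable {r : ℕ}

theorem vol_slice (hr : 1 ≤ r) {k : ℕ} (hk1 : 1 ≤ k) :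
    volume {x : Fin r → ℝ | (∀ i, x i ∈ Set.Icc (0:ℝ) 1) ∧
        (k:ℝ) - 1 ≤ ∑ i, x i ∧ ∑ i, x i ≤ (k:ℝ)}
      = ((Finset.univ.filter fun σ : Equiv.Perm (Fin r) => dcount σ = k - 1).card : ℝ≥0∞)
        * ((r.factorial : ℝ≥0∞))⁻¹ := by
  set S : Set (Fin r → ℝ) := {x | (∀ i, x i ∈ Set.Icc (0:ℝ) 1) ∧
      (k:ℝ) - 1 ≤ ∑ i, x i ∧ ∑ i, x i ≤ (k:ℝ)} with hS
  set F : Finset (Equiv.Perm (Fin r)) := Finset.univ.filter fun σ => dcount σ = k - 1 with hF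
  set U : Set (Fin r → ℝ) := ⋃ σ ∈ F, psi σ ⁻¹' (cube r ∩ Reg σ) with hU
  have hUvol : volume U = (F.card : ℝ≥0∞) * ((r.factorial : ℝ≥0∞))⁻¹ := by
    rw [hU, measure_biUnion_finset]
    · rw [Finset.sum_congr rfl fun σ _ => by
        rw [vol_psi_preimage σ _, vol_cube_reg σ]]
      rw [Finset.sum_const, nsmul_eq_mul]
    · intro σ hσm τ hτm hne
      refine Set.disjoint_left.mpr fun x hx1 hx2 => hne ?_
      exact pieces_disjoint hx1 hx2
    · intro σ _
      exact (meas_psi σ) (meas_cube.inter (meas_Reg σ))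
  have hcast : ((k - 1 : ℕ) : ℝ) = (k:ℝ) - 1 := by
    push_cast [hk1]; ring
  have hsub : U ⊆ S := by
    intro x hx
    rw [hU] at hx
    simp only [Set.mem_iUnion] at hx
    obtain ⟨σ, hσF, hxσ⟩ := hx
    have hd : dcount σ = k - 1 := by
      rw [hF] at hσF
      exact (Finset.mem_filter.mp hσF).2
    obtain ⟨hc, h1, h2⟩ := backward hr σ hxσ
    refine ⟨fun i => Set.mem_Icc.mpr ⟨le_of_lt (hc i).1, le_of_lt (hc i).2⟩, ?_, ?_⟩
    · rw [hd] at h1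
      rw [hcast] at h1
      linarith
    · rw [hd] at h2
      rw [hcast] at h2
      linarith
  apply le_antisymm
  · calc volume S ≤ volume (U ∪ ({x : Fin r → ℝ | ∃ i, ∃ m : ℤ, psum x i = m}
        ∪ {x : Fin r → ℝ | ∃ i j, i ≠ j ∧ ∃ m : ℤ, psum x i - psum x j = m})) := by
          refine measure_mono fun x hx => ?_
          obtain ⟨hxc, hx1, hx2⟩ := hx
          by_cases hN1 : ∃ i, ∃ m : ℤ, psum x i = (m:ℝ)
          · exact Or.inr (Or.inl hN1)
          by_cases hN2 : ∃ i j, i ≠ j ∧ ∃ m : ℤ, psum x i - psum x j = (m:ℝ)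
          · exact Or.inr (Or.inr hN2)
          push_neg at hN1 hN2
          obtain ⟨σ, hσd, hσm⟩ := forward hr hk1 hxc hx1 hx2 hN1
            (fun i j hij m => hN2 i j hij m)
          refine Or.inl ?_
          rw [hU]
          simp only [Set.mem_iUnion]
          exact ⟨σ, by rw [hF]; exact Finset.mem_filter.mpr ⟨Finset.mem_univ _, hσd⟩, hσm⟩
      _ ≤ volume U + volume ({x : Fin r → ℝ | ∃ i, ∃ m : ℤ, psum x i = m}
            ∪ {x : Fin r → ℝ | ∃ i j, i ≠ j ∧ ∃ m : ℤ, psum x i - psum x j = m}) :=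
          measure_union_le _ _
      _ ≤ volume U + (volume {x : Fin r → ℝ | ∃ i, ∃ m : ℤ, psum x i = m}
            + volume {x : Fin r → ℝ | ∃ i j, i ≠ j ∧ ∃ m : ℤ, psum x i - psum x j = m}) := by
          gcongr
          exact measure_union_le _ _
      _ = volume U := by rw [null_psum_int, null_psum_diff]; ring
      _ = (F.card : ℝ≥0∞) * ((r.factorial : ℝ≥0∞))⁻¹ := hUvol
  · rw [← hUvol]
    exact measure_mono hsub

end S9


namespace S10
open scoped Classical ENNReal
open S2 S3 S4 S5 S6 S7 S8 S9

variable {r : ℕ}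

lemma dcount_card (σ : Equiv.Perm (Fin r)) :
    dcount σ = (Finset.univ.filter (desc σ)).card := by
  rw [dcount, Finset.card_filter]
  exact Finset.sum_congr rfl fun i _ => rfl

/-- relation between the descent statistic in the theorem and `dcount` -/
lemma des_eq_dcount (des : Equiv.Perm (Fin r) → ℕ)
    (hdes : ∀ w, des w = Nat.card {p : Fin r × Fin r //
      (p.2 : ℕ) = (p.1 : ℕ) + 1 ∧ w p.2 < w p.1}) (w : Equiv.Perm (Fin r)) :
    des w = dcount w⁻¹ := by
  rw [hdes w, Nat.card_eq_fintype_card, Fintype.card_subtype, dcount_card]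
  refine Finset.card_bij' (fun p _ => p.2) (fun i hi => (Stmt13.pidx i ?_, i)) ?_ ?_ ?_ ?_
  · have := (Finset.mem_filter.mp hi).2
    rw [desc] at this
    by_contra h
    rw [dif_pos h] at this
    exact this
  · intro p hp
    obtain ⟨hp2, hlt⟩ := (Finset.mem_filter.mp hp).2
    refine Finset.mem_filter.mpr ⟨Finset.mem_univ _, ?_⟩
    have h0 : (p.2 : ℕ) ≠ 0 := by omega
    rw [desc, dif_neg h0]
    have hpidx : Stmt13.pidx p.2 h0 = p.1 := by
      simp only [← Fin.val_eq_val, Stmt13.pidx]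
      omega
    rw [hpidx]
    simpa using hlt
  · intro i hi
    refine Finset.mem_filter.mpr ⟨Finset.mem_univ _, ?_, ?_⟩
    · simp only [Stmt13.pidx]
      have := (Finset.mem_filter.mp hi).2
      rw [desc] at this
      have h0 : (i : ℕ) ≠ 0 := by
        by_contra h
        rw [dif_pos h] at this
        exact this
      omega
    · have := (Finset.mem_filter.mp hi).2
      rw [desc] at this
      have h0 : (i : ℕ) ≠ 0 := by
        by_contra h
        rw [dif_pos h] at this
        exact this
      rw [dif_neg h0] at this
      simpa using this
  · intro p hp
    obtain ⟨hp2, _⟩ := (Finset.mem_filter.mp hp).2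
    ext
    · simp only [← Fin.val_eq_val, Stmt13.pidx]
      omega
    · rfl
  · intro i _
    rfl

lemma card_des_filter (des : Equiv.Perm (Fin r) → ℕ)
    (hdes : ∀ w, des w = Nat.card {p : Fin r × Fin r //
      (p.2 : ℕ) = (p.1 : ℕ) + 1 ∧ w p.2 < w p.1}) (m : ℕ) :
    (Finset.univ.filter fun w : Equiv.Perm (Fin r) => des w = m).card
      = (Finset.univ.filter fun σ : Equiv.Perm (Fin r) => dcount σ = m).card := by
  refine Finset.card_bij' (fun w _ => w⁻¹) (fun σ _ => σ⁻¹) ?_ ?_ ?_ ?_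
  · intro w hw
    refine Finset.mem_filter.mpr ⟨Finset.mem_univ _, ?_⟩
    have := (Finset.mem_filter.mp hw).2
    rw [des_eq_dcount des hdes w] at this
    exact this
  · intro σ hσ
    refine Finset.mem_filter.mpr ⟨Finset.mem_univ _, ?_⟩
    rw [des_eq_dcount des hdes σ⁻¹, inv_inv]
    exact (Finset.mem_filter.mp hσ).2
  · intro w _; simp
  · intro σ _; simp

lemma des_le (hr : 1 ≤ r) (des : Equiv.Perm (Fin r) → ℕ)
    (hdes : ∀ w, des w = Nat.card {p : Fin r × Fin r //
      (p.2 : ℕ) = (p.1 : ℕ) + 1 ∧ w p.2 < w p.1}) (w : Equiv.Perm (Fin r)) :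
    des w ≤ r - 1 := by
  rw [des_eq_dcount des hdes w, dcount_card]
  set z : Fin r := ⟨0, by omega⟩ with hz
  have hsub : Finset.univ.filter (desc w⁻¹) ⊆ Finset.univ.erase z := by
    intro i hi
    have := (Finset.mem_filter.mp hi).2
    rw [desc] at this
    have h0 : (i : ℕ) ≠ 0 := by
      by_contra h
      rw [dif_pos h] at this
      exact this
    refine Finset.mem_erase.mpr ⟨?_, Finset.mem_univ _⟩
    simp only [ne_eq, ← Fin.val_eq_val, hz]
    exact h0
  calc (Finset.univ.filter (desc w⁻¹)).card ≤ (Finset.univ.erase z).card :=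
        Finset.card_le_card hsub
    _ = r - 1 := by
        rw [Finset.card_erase_of_mem (Finset.mem_univ _), Finset.card_univ, Fintype.card_fin]

end S10


open MeasureTheory Polynomial

/-- The generating function for the normalized volumes (`r!` times Euclidean volume) of the
slices of the unit cube `[0,1]^r` by the hyperplanes `x_1 + ⋯ + x_r = k` equals the
Eulerian polynomial `A_r(q) = ∑_{w ∈ S_r} q^{des(w)+1}`. -/
theorem stmt_13 (r : ℕ) (hr : 1 ≤ r)
    (des : Equiv.Perm (Fin r) → ℕ)
    (hdes : ∀ w, des w = Nat.card {p : Fin r × Fin r //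
      (p.2 : ℕ) = (p.1 : ℕ) + 1 ∧ w p.2 < w p.1}) :
    ∑ k ∈ Finset.Icc 1 r, (C ((r.factorial : ℝ) *
        (volume {x : Fin r → ℝ | (∀ i, x i ∈ Set.Icc (0 : ℝ) 1) ∧
          (k : ℝ) - 1 ≤ ∑ i, x i ∧ ∑ i, x i ≤ (k : ℝ)}).toReal) * X ^ k)
      = ∑ w : Equiv.Perm (Fin r), (X : ℝ[X]) ^ (des w + 1) := by
  classical
  have hvol : ∀ k ∈ Finset.Icc 1 r, (r.factorial : ℝ) *
      (volume {x : Fin r → ℝ | (∀ i, x i ∈ Set.Icc (0 : ℝ) 1) ∧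
        (k : ℝ) - 1 ≤ ∑ i, x i ∧ ∑ i, x i ≤ (k : ℝ)}).toReal
      = ((Finset.univ.filter fun w : Equiv.Perm (Fin r) => des w = k - 1).card : ℝ) := by
    intro k hk
    obtain ⟨hk1, hk2⟩ := Finset.mem_Icc.mp hk
    rw [S9.vol_slice hr hk1]
    rw [ENNReal.toReal_mul, ENNReal.toReal_inv]
    rw [ENNReal.toReal_natCast, ENNReal.toReal_natCast]
    rw [S10.card_des_filter des hdes (k - 1)]
    have hfac : (r.factorial : ℝ) ≠ 0 := by
      exact_mod_cast Nat.factorial_ne_zero r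
    field_simp
  rw [← Finset.sum_fiberwise_of_maps_to (g := fun w : Equiv.Perm (Fin r) => des w + 1)
      (t := Finset.Icc 1 r) (fun w _ => Finset.mem_Icc.mpr
        ⟨Nat.le_add_left 1 (des w), by
          show des w + 1 ≤ r
          have := S10.des_le hr des hdes w
          omega⟩)
      (fun w => (X : ℝ[X]) ^ (des w + 1))]
  refine Finset.sum_congr rfl fun k hk => ?_
  obtain ⟨hk1, hk2⟩ := Finset.mem_Icc.mp hk
  have hsc : ∑ w ∈ Finset.univ.filter (fun w => des w + 1 = k), (X : ℝ[X]) ^ (des w + 1)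
      = ∑ _w ∈ Finset.univ.filter (fun w => des w + 1 = k), (X : ℝ[X]) ^ k :=
    Finset.sum_congr rfl fun w hw => by rw [(Finset.mem_filter.mp hw).2]
  rw [hsc]
  rw [Finset.sum_const, nsmul_eq_mul]
  rw [hvol k hk]
  have hfilter : Finset.univ.filter (fun w : Equiv.Perm (Fin r) => des w + 1 = k)
      = Finset.univ.filter (fun w => des w = k - 1) := by
    refine Finset.filter_congr fun w _ => ?_
    constructor <;> intro h <;> omega
  rw [hfilter, Polynomial.C_eq_natCast]
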